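/- For all natural numbers s, t with 1 ≤ t ≤ s, in ℤ[y,y⁻¹,z,z⁻¹][[q]] one has ∏_{ε₁,ε₂∈{±1}}(1 − q y^{ε₁} z^{ε₂}) · ∑_{ℓ=0}^{t−1} ∑_{n=0}^{t−1−ℓ} ∑_{σ=ℓ}^{∞} q^{σ+2n} χ_{2s−2ℓ+σ}(y) χ_σ(z) = χ_{2s}(y) − q^t χ_{2s−t}(y) χ_t(z) + q^{t+1} χ_{2s−t−1}(y) χ_{t−1}(z). (This is the so(2)⊕so(4) decomposition of the so(2,4) rectangular partially massless module of spin s and depth t: D(s+2−t;(s,s)) ≅ ⊕_{ℓ=0}^{t−1} ⊕_{n=0}^{t−1−ℓ} ⊕_{σ≥ℓ} D(s+2−t+σ+2n;(s+σ−ℓ,s−ℓ)).) -/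

import Mathlib

/-- The two-variable Laurent polynomial ring ℤ[y,y⁻¹,z,z⁻¹], realised as
Laurent polynomials in `z` over Laurent polynomials in `y`. -/
noncomputable abbrev L2 : Type := LaurentPolynomial (LaurentPolynomial ℤ)

/-- The su(2) character `χ_n(y) = ∑_{k=0}^n y^{n-2k}`, in the variable `y`. -/
noncomputable def chiY (n : ℕ) : L2 :=
  LaurentPolynomial.C (∑ k ∈ Finset.range (n + 1), LaurentPolynomial.T ((n : ℤ) - 2 * k))

/-- The su(2) character `χ_n(z) = ∑_{k=0}^n z^{n-2k}`, in the variable `z`. -/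
noncomputable def chiZv (n : ℕ) : L2 :=
  ∑ k ∈ Finset.range (n + 1), LaurentPolynomial.T ((n : ℤ) - 2 * k)

/-- `y^{ε₁} z^{ε₂}` as an element of ℤ[y,y⁻¹,z,z⁻¹]. -/
noncomputable def yz (e₁ e₂ : ℤ) : L2 :=
  LaurentPolynomial.C (LaurentPolynomial.T e₁) * LaurentPolynomial.T e₂

/-- `∏_{ε₁,ε₂∈{±1}} (1 - q y^{ε₁} z^{ε₂})`, the inverse of the universal AdS₅
function `P₄(q,y,z)`, in ℤ[y,y⁻¹,z,z⁻¹][[q]]. -/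
noncomputable def P4inv : PowerSeries L2 :=
  (1 - PowerSeries.C (R := L2) (yz 1 1) * PowerSeries.X) *
  (1 - PowerSeries.C (R := L2) (yz 1 (-1)) * PowerSeries.X) *
  (1 - PowerSeries.C (R := L2) (yz (-1) 1) * PowerSeries.X) *
  (1 - PowerSeries.C (R := L2) (yz (-1) (-1)) * PowerSeries.X)

open LaurentPolynomial Finset

instance : IsDomain (LaurentPolynomial ℤ) := by constructor
instance : IsDomain L2 := by constructor
instance : IsDomain (PowerSeries L2) := inferInstance

lemma yz_mul (a b c d : ℤ) : yz a b * yz c d = yz (a + c) (b + d) := by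
  simp only [yz, T_add, map_mul]; ring

lemma yz_pow (a b : ℤ) (n : ℕ) : yz a b ^ n = yz (n * a) (n * b) := by
  simp [yz, mul_pow, ← map_pow, T_pow]

lemma yz_zero : yz 0 0 = 1 := by simp [yz]

lemma yz_inv (a b : ℤ) : yz a b * yz (-a) (-b) = 1 := by
  rw [yz_mul, add_neg_cancel, add_neg_cancel, yz_zero]

lemma C_inj {R : Type*} [CommRing R] :
    Function.Injective (LaurentPolynomial.C (R := R)) := by
  intro x y h
  simpa using congrArg (fun f => f.coeff 0) h

lemma T_sub_mul_sum {R : Type*} [CommRing R] (n : ℕ) :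
    (T 1 - T (-1) : LaurentPolynomial R) * (∑ k ∈ range (n + 1), T ((n : ℤ) - 2 * k)) =
      T ((n : ℤ) + 1) - T (-(n : ℤ) - 1) := by
  have h : (T 1 - T (-1) : LaurentPolynomial R) * (∑ k ∈ range (n + 1), T ((n : ℤ) - 2 * k)) =
      ∑ k ∈ range (n + 1),
        ((fun k : ℕ => (T ((n : ℤ) + 1 - 2 * k) : LaurentPolynomial R)) k
          - (fun k : ℕ => (T ((n : ℤ) + 1 - 2 * k) : LaurentPolynomial R)) (k + 1)) := by
    rw [sub_mul, Finset.mul_sum, Finset.mul_sum, ← Finset.sum_sub_distrib]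
    refine Finset.sum_congr rfl fun k _ => ?_
    rw [← T_add, ← T_add]
    congr 2 <;> push_cast <;> ring
  rw [h, Finset.sum_range_sub']
  congr 2 <;> push_cast <;> ring

lemma Tsub_ne {R : Type*} [CommRing R] [IsDomain R] : (T 1 - T (-1) : LaurentPolynomial R) ≠ 0 := by
  have h2 : (T 1 - T (-1) : LaurentPolynomial R) = Polynomial.toLaurent (Polynomial.X ^ 2 - 1) * T (-1) := by
    rw [map_sub, map_pow, Polynomial.toLaurent_X, map_one, T_pow, sub_mul, ← T_add, one_mul]
    norm_num
  rw [h2]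
  apply mul_ne_zero
  · rw [Ne, Polynomial.toLaurent_eq_zero]
    intro h
    have := congrArg (fun p => Polynomial.coeff p 2) h
    simp [Polynomial.coeff_one] at this
  · exact (isUnit_T _).ne_zero

noncomputable def dlt : L2 :=
  LaurentPolynomial.C (T 1 - T (-1)) * ((T 1 : L2) - T (-1))

lemma dlt_ne : dlt ≠ 0 :=
  mul_ne_zero (fun h => Tsub_ne (R := ℤ) (C_inj (by simpa using h))) (Tsub_ne)

lemma dlt_mul_chi (a b : ℕ) :
    dlt * (chiY a * chiZv b) =
      yz ((a : ℤ) + 1) ((b : ℤ) + 1) - yz ((a : ℤ) + 1) (-(b : ℤ) - 1)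
        - yz (-(a : ℤ) - 1) ((b : ℤ) + 1) + yz (-(a : ℤ) - 1) (-(b : ℤ) - 1) := by
  have h : dlt * (chiY a * chiZv b) =
      LaurentPolynomial.C ((T 1 - T (-1)) * (∑ k ∈ range (a + 1), T ((a : ℤ) - 2 * k))) *
        (((T 1 : L2) - T (-1)) * (∑ k ∈ range (b + 1), T ((b : ℤ) - 2 * k))) := by
    simp only [dlt, chiY, chiZv, map_mul]; ring
  rw [h, T_sub_mul_sum, T_sub_mul_sum, map_sub]
  simp only [yz]
  ring

lemma chiZv_zero : chiZv 0 = 1 := by simp [chiZv]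

open PowerSeries

noncomputable def gt (c a : L2) (l : ℕ) : PowerSeries L2 :=
  PowerSeries.mk fun σ => if l ≤ σ then c * a ^ σ else 0

lemma gt_collapse (c a : L2) (l : ℕ) :
    (1 - PowerSeries.C (R := L2) a * X) * gt c a l = PowerSeries.C (R := L2) (c * a ^ l) * X ^ l := by
  apply PowerSeries.ext; intro m
  rw [sub_mul, one_mul, mul_assoc, map_sub, PowerSeries.coeff_C_mul,
    PowerSeries.coeff_C_mul_X_pow]
  cases m with
  | zero =>
      simp only [gt, PowerSeries.coeff_zero_X_mul, coeff_mk, mul_zero, sub_zero]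
      split_ifs with h1 h2
      · rw [← h2]
      · omega
      · omega
      · rfl
  | succ m =>
      simp only [gt, PowerSeries.coeff_succ_X_mul, coeff_mk]
      split_ifs with h1 h2 h3 h4 h5 <;>
        first
          | omega
          | (rw [pow_succ]; ring1)
          | (rw [← h4, pow_succ]; ring1)
          | ring1

noncomputable def Bs (b l : ℕ) : PowerSeries L2 :=
  PowerSeries.mk fun σ => if l ≤ σ then chiY (b + σ) * chiZv σ else 0

lemma dlt_Bs (b l : ℕ) :
    PowerSeries.C (R := L2) dlt * Bs b l =
      gt (yz ((b : ℤ) + 1) 1) (yz 1 1) l - gt (yz ((b : ℤ) + 1) (-1)) (yz 1 (-1)) l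
        - gt (yz (-(b : ℤ) - 1) 1) (yz (-1) 1) l
        + gt (yz (-(b : ℤ) - 1) (-1)) (yz (-1) (-1)) l := by
  apply PowerSeries.ext; intro σ
  simp only [map_sub, map_add, PowerSeries.coeff_C_mul, Bs, gt, coeff_mk]
  split_ifs with h
  · rw [dlt_mul_chi]
    simp only [yz_pow, yz_mul, mul_one, mul_neg_one]
    have e1 : ((b + σ : ℕ) : ℤ) + 1 = (b : ℤ) + 1 + σ := by push_cast; ring
    have e2 : ((σ : ℕ) : ℤ) + 1 = 1 + (σ : ℤ) := by ring
    have e3 : -((b + σ : ℕ) : ℤ) - 1 = -(b : ℤ) - 1 + -(σ : ℤ) := by push_cast; ring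
    have e4 : -((σ : ℕ) : ℤ) - 1 = -1 + -(σ : ℤ) := by ring
    rw [e1, e2, e3, e4]
  · simp

noncomputable def Q1 : PowerSeries L2 :=
  (1 - PowerSeries.C (R := L2) (yz 1 (-1)) * X) * (1 - PowerSeries.C (R := L2) (yz (-1) 1) * X) *
    (1 - PowerSeries.C (R := L2) (yz (-1) (-1)) * X)
noncomputable def Q2 : PowerSeries L2 :=
  (1 - PowerSeries.C (R := L2) (yz 1 1) * X) * (1 - PowerSeries.C (R := L2) (yz (-1) 1) * X) *
    (1 - PowerSeries.C (R := L2) (yz (-1) (-1)) * X)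
noncomputable def Q3 : PowerSeries L2 :=
  (1 - PowerSeries.C (R := L2) (yz 1 1) * X) * (1 - PowerSeries.C (R := L2) (yz 1 (-1)) * X) *
    (1 - PowerSeries.C (R := L2) (yz (-1) (-1)) * X)
noncomputable def Q4 : PowerSeries L2 :=
  (1 - PowerSeries.C (R := L2) (yz 1 1) * X) * (1 - PowerSeries.C (R := L2) (yz 1 (-1)) * X) *
    (1 - PowerSeries.C (R := L2) (yz (-1) 1) * X)

noncomputable def Dl (s l : ℕ) : PowerSeries L2 :=
  PowerSeries.C (R := L2) (yz (2*(s:ℤ)+1) 1) * (PowerSeries.C (R := L2) (yz (-1) 1))^l * Q1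
    - PowerSeries.C (R := L2) (yz (2*(s:ℤ)+1) (-1)) * (PowerSeries.C (R := L2) (yz (-1) (-1)))^l * Q2
    - PowerSeries.C (R := L2) (yz (-2*(s:ℤ)-1) 1) * (PowerSeries.C (R := L2) (yz 1 1))^l * Q3
    + PowerSeries.C (R := L2) (yz (-2*(s:ℤ)-1) (-1)) * (PowerSeries.C (R := L2) (yz 1 (-1)))^l * Q4

lemma P4_dlt_Bs (s l : ℕ) (hls : l ≤ s) :
    P4inv * (PowerSeries.C (R := L2) dlt * Bs (2*s - 2*l) l) = X ^ l * Dl s l := by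
  have hcast : ((2*s - 2*l : ℕ) : ℤ) = 2*(s:ℤ) - 2*(l:ℤ) := by
    have : 2*l ≤ 2*s := by omega
    push_cast [Nat.cast_sub this]; ring
  have key : ∀ (e f g h : ℤ) (c : L2),
      P4inv * gt c (yz e f) l = PowerSeries.C (R := L2) c * (PowerSeries.C (R := L2) (yz e f))^l * X^l *
        ((1 - PowerSeries.C (R := L2) (yz g 1) * X) * (1 - PowerSeries.C (R := L2) (yz h 1) * X)) →
        True := fun _ _ _ _ _ _ => trivial
  clear key
  rw [dlt_Bs]
  have h1 : P4inv * gt (yz (((2*s - 2*l : ℕ) : ℤ) + 1) 1) (yz 1 1) l =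
      Q1 * (PowerSeries.C (R := L2) (yz (((2*s - 2*l : ℕ) : ℤ) + 1) 1 * (yz 1 1)^l) * X^l) := by
    have : P4inv = (1 - PowerSeries.C (R := L2) (yz 1 1) * X) * Q1 := by unfold P4inv Q1; ring
    rw [this, mul_comm (1 - PowerSeries.C (R := L2) (yz 1 1) * X) Q1, mul_assoc, gt_collapse]
  have h2 : P4inv * gt (yz (((2*s - 2*l : ℕ) : ℤ) + 1) (-1)) (yz 1 (-1)) l =
      Q2 * (PowerSeries.C (R := L2) (yz (((2*s - 2*l : ℕ) : ℤ) + 1) (-1) * (yz 1 (-1))^l) * X^l) := by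
    have : P4inv = (1 - PowerSeries.C (R := L2) (yz 1 (-1)) * X) * Q2 := by unfold P4inv Q2; ring
    rw [this, mul_comm (1 - PowerSeries.C (R := L2) (yz 1 (-1)) * X) Q2, mul_assoc, gt_collapse]
  have h3 : P4inv * gt (yz (-((2*s - 2*l : ℕ) : ℤ) - 1) 1) (yz (-1) 1) l =
      Q3 * (PowerSeries.C (R := L2) (yz (-((2*s - 2*l : ℕ) : ℤ) - 1) 1 * (yz (-1) 1)^l) * X^l) := by
    have : P4inv = (1 - PowerSeries.C (R := L2) (yz (-1) 1) * X) * Q3 := by unfold P4inv Q3; ring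
    rw [this, mul_comm (1 - PowerSeries.C (R := L2) (yz (-1) 1) * X) Q3, mul_assoc, gt_collapse]
  have h4 : P4inv * gt (yz (-((2*s - 2*l : ℕ) : ℤ) - 1) (-1)) (yz (-1) (-1)) l =
      Q4 * (PowerSeries.C (R := L2) (yz (-((2*s - 2*l : ℕ) : ℤ) - 1) (-1) * (yz (-1) (-1))^l) * X^l) := by
    have : P4inv = (1 - PowerSeries.C (R := L2) (yz (-1) (-1)) * X) * Q4 := by unfold P4inv Q4; ring
    rw [this, mul_comm (1 - PowerSeries.C (R := L2) (yz (-1) (-1)) * X) Q4, mul_assoc, gt_collapse]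
  rw [mul_add, mul_sub, mul_sub, h1, h2, h3, h4]
  have c1 : yz (((2*s - 2*l : ℕ) : ℤ) + 1) 1 * (yz 1 1)^l = yz (2*(s:ℤ)+1) 1 * (yz (-1) 1)^l := by
    rw [yz_pow, yz_pow, yz_mul, yz_mul]; rw [hcast]; congr 1 <;> ring
  have c2 : yz (((2*s - 2*l : ℕ) : ℤ) + 1) (-1) * (yz 1 (-1))^l =
      yz (2*(s:ℤ)+1) (-1) * (yz (-1) (-1))^l := by
    rw [yz_pow, yz_pow, yz_mul, yz_mul]; rw [hcast]; congr 1 <;> ring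
  have c3 : yz (-((2*s - 2*l : ℕ) : ℤ) - 1) 1 * (yz (-1) 1)^l =
      yz (-2*(s:ℤ)-1) 1 * (yz 1 1)^l := by
    rw [yz_pow, yz_pow, yz_mul, yz_mul]; rw [hcast]; congr 1 <;> ring
  have c4 : yz (-((2*s - 2*l : ℕ) : ℤ) - 1) (-1) * (yz (-1) (-1))^l =
      yz (-2*(s:ℤ)-1) (-1) * (yz 1 (-1))^l := by
    rw [yz_pow, yz_pow, yz_mul, yz_mul]; rw [hcast]; congr 1 <;> ring
  rw [c1, c2, c3, c4]
  unfold Dl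
  simp only [map_mul, map_pow]
  ring

lemma geo1 (x : PowerSeries L2) (k : ℕ) :
    (1 - x) * ∑ n ∈ range k, x^n = 1 - x^k := by
  linear_combination -(geom_sum_mul x k)

noncomputable def Spl (a : L2) (t : ℕ) : PowerSeries L2 :=
  ∑ l ∈ range t, (PowerSeries.C (R := L2) a * X)^l

noncomputable def Smn (a : L2) (t : ℕ) : PowerSeries L2 :=
  ∑ l ∈ range t, (PowerSeries.C (R := L2) a)^l * X^(2*t - l)

lemma Spl_collapse (a : L2) (t : ℕ) :
    (1 - PowerSeries.C (R := L2) a * X) * Spl a t = 1 - (PowerSeries.C (R := L2) a)^t * X^t := by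
  rw [Spl, geo1, mul_pow]

lemma Smn_collapse (a : L2) (t : ℕ) :
    (PowerSeries.C (R := L2) a - X) * Smn a t = (PowerSeries.C (R := L2) a)^t * X^(t+1) - X^(2*t+1) := by
  have h := geom_sum₂_mul (PowerSeries.C (R := L2) a) X t
  have hsmn : Smn a t = X^(t+1) * ∑ i ∈ range t, (PowerSeries.C (R := L2) a)^i * X^(t-1-i) := by
    unfold Smn
    rw [Finset.mul_sum]
    refine Finset.sum_congr rfl fun i hi => ?_
    have hi' : i < t := Finset.mem_range.mp hi
    rw [← mul_assoc, mul_comm (X^(t+1)) ((PowerSeries.C (R := L2) a)^i), mul_assoc, ← pow_add]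
    congr 2
    omega
  rw [hsmn]
  have h2 : (PowerSeries.C (R := L2) a - X) * (X^(t+1) * ∑ i ∈ range t, (PowerSeries.C (R := L2) a)^i * X^(t-1-i))
      = X^(t+1) * ((∑ i ∈ range t, (PowerSeries.C (R := L2) a)^i * X^(t-1-i)) * (PowerSeries.C (R := L2) a - X)) := by
    ring
  rw [h2, h, mul_sub, ← pow_add]
  have h3 : t + 1 + t = 2*t+1 := by omega
  rw [h3]
  ring

lemma F_eq (s t : ℕ) :
    (PowerSeries.mk (fun m => ∑ ℓ ∈ Finset.range t, ∑ n ∈ Finset.range (t - ℓ),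
        if 2 * n + ℓ ≤ m then chiY (2 * s - 2 * ℓ + (m - 2 * n)) * chiZv (m - 2 * n) else 0)) =
      ∑ l ∈ range t, ∑ n ∈ range (t - l), X^(2*n) * Bs (2*s - 2*l) l := by
  apply PowerSeries.ext; intro m
  rw [coeff_mk, map_sum]
  refine Finset.sum_congr rfl fun l hl => ?_
  rw [map_sum]
  refine Finset.sum_congr rfl fun n hn => ?_
  rw [PowerSeries.coeff_X_pow_mul', Bs, coeff_mk]
  split_ifs <;> first | rfl | omega

lemma CyzMul (e1 f1 e2 f2 e f : ℤ) (he : e1 + e2 = e) (hf : f1 + f2 = f) :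
    PowerSeries.C (R := L2) (yz e1 f1) * PowerSeries.C (R := L2) (yz e2 f2) = PowerSeries.C (R := L2) (yz e f) := by
  rw [← map_mul, yz_mul, he, hf]

lemma Cyz_eq (e f e' f' : ℤ) (he : e = e') (hf : f = f') :
    PowerSeries.C (R := L2) (yz e f) = PowerSeries.C (R := L2) (yz e' f') := by rw [he, hf]

-- split forms of the four unit atoms
lemma sA1 : PowerSeries.C (R := L2) (yz 1 1) = PowerSeries.C (R := L2) (yz 1 0) * PowerSeries.C (R := L2) (yz 0 1) :=
  (CyzMul 1 0 0 1 1 1 (by ring) (by ring)).symm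
lemma sA2 : PowerSeries.C (R := L2) (yz 1 (-1)) = PowerSeries.C (R := L2) (yz 1 0) * PowerSeries.C (R := L2) (yz 0 (-1)) :=
  (CyzMul 1 0 0 (-1) 1 (-1) (by ring) (by ring)).symm
lemma sA3 : PowerSeries.C (R := L2) (yz (-1) 1) = PowerSeries.C (R := L2) (yz (-1) 0) * PowerSeries.C (R := L2) (yz 0 1) :=
  (CyzMul (-1) 0 0 1 (-1) 1 (by ring) (by ring)).symm
lemma sA4 : PowerSeries.C (R := L2) (yz (-1) (-1)) = PowerSeries.C (R := L2) (yz (-1) 0) * PowerSeries.C (R := L2) (yz 0 (-1)) :=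
  (CyzMul (-1) 0 0 (-1) (-1) (-1) (by ring) (by ring)).symm

lemma hS_gen (t : ℕ) (a b : ℤ) :
    (1 - PowerSeries.C (R := L2) (yz a 0) * PowerSeries.C (R := L2) (yz 0 b) * X) * Spl (yz a b) t =
      1 - PowerSeries.C (R := L2) (yz ((t:ℤ)*a) 0) * PowerSeries.C (R := L2) (yz 0 ((t:ℤ)*b)) * X^t := by
  have h := Spl_collapse (yz a b) t
  rw [← map_pow, yz_pow] at h
  rw [CyzMul a 0 0 b a b (by ring) (by ring),
      CyzMul ((t:ℤ)*a) 0 0 ((t:ℤ)*b) ((t:ℤ)*a) ((t:ℤ)*b) (by ring) (by ring)]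
  exact h

lemma hR_gen (t : ℕ) (a b : ℤ) :
    (PowerSeries.C (R := L2) (yz a 0) * PowerSeries.C (R := L2) (yz 0 b) - X) * Smn (yz a b) t =
      PowerSeries.C (R := L2) (yz ((t:ℤ)*a) 0) * PowerSeries.C (R := L2) (yz 0 ((t:ℤ)*b)) * X^t * X
        - X^t * X^t * X := by
  have h := Smn_collapse (yz a b) t
  rw [← map_pow, yz_pow] at h
  rw [CyzMul a 0 0 b a b (by ring) (by ring),
      CyzMul ((t:ℤ)*a) 0 0 ((t:ℤ)*b) ((t:ℤ)*a) ((t:ℤ)*b) (by ring) (by ring)]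
  rw [h]
  rw [pow_succ, ← pow_add]
  have : 2*t+1 = t + t + 1 := by omega
  rw [this, pow_succ, pow_add]
  ring

lemma Spl_def (a : L2) (t : ℕ) :
    Spl a t = ∑ l ∈ range t, (PowerSeries.C (R := L2) a * X)^l := rfl

lemma Smn_def (a : L2) (t : ℕ) :
    Smn a t = ∑ l ∈ range t, (PowerSeries.C (R := L2) a)^l * X^(2*t - l) := rfl

lemma yz_ne (e f : ℤ) : yz e f ≠ 0 :=
  mul_ne_zero (fun h => (isUnit_T e).ne_zero (C_inj (R := LaurentPolynomial ℤ)
    (by rw [map_zero]; simpa using h))) (isUnit_T f).ne_zero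

lemma fac_ne (a b : ℤ) :
    (PowerSeries.C (R := L2) (yz a 0) * PowerSeries.C (R := L2) (yz 0 b) - X : PowerSeries L2) ≠ 0 := by
  intro h
  have h2 := congrArg (PowerSeries.constantCoeff (R := L2)) h
  simp only [map_sub, map_mul, PowerSeries.constantCoeff_C, PowerSeries.constantCoeff_X,
    sub_zero, map_zero] at h2
  rw [yz_mul] at h2
  exact yz_ne _ _ h2

lemma oneX2_ne : (1 - X^2 : PowerSeries L2) ≠ 0 := by
  intro h
  have h2 := congrArg (PowerSeries.constantCoeff (R := L2)) h
  simp at h2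

lemma Cdlt_ne : (PowerSeries.C (R := L2) dlt) ≠ 0 := by
  intro h
  have h2 := congrArg (PowerSeries.constantCoeff (R := L2)) h
  simp only [PowerSeries.constantCoeff_C, map_zero] at h2
  exact dlt_ne h2
lemma dlt_RHS (s t : ℕ) (ht : 1 ≤ t) (hts : t ≤ s) :
    PowerSeries.C (R := L2) dlt *
      (PowerSeries.C (R := L2) (chiY (2 * s)) -
        PowerSeries.C (R := L2) (chiY (2 * s - t) * chiZv t) * PowerSeries.X ^ t +
        PowerSeries.C (R := L2) (chiY (2 * s - t - 1) * chiZv (t - 1)) * PowerSeries.X ^ (t + 1)) =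
    (PowerSeries.C (R := L2) (yz (2*(s:ℤ)+1) (0)) * PowerSeries.C (R := L2) (yz (0) (1)) - (PowerSeries.C (R := L2) (yz (2*(s:ℤ)+1) (0)) * PowerSeries.C (R := L2) (yz (0) (-1))) - (PowerSeries.C (R := L2) (yz (-2*(s:ℤ)-1) (0)) * PowerSeries.C (R := L2) (yz (0) (1))) + PowerSeries.C (R := L2) (yz (-2*(s:ℤ)-1) (0)) * PowerSeries.C (R := L2) (yz (0) (-1)))
      - X^t * (PowerSeries.C (R := L2) (yz (2*(s:ℤ)+1) (0)) * PowerSeries.C (R := L2) (yz (0) (1)) * (PowerSeries.C (R := L2) (yz (-(t:ℤ)) (0)) * PowerSeries.C (R := L2) (yz (0) ((t:ℤ)))) - PowerSeries.C (R := L2) (yz (2*(s:ℤ)+1) (0)) * PowerSeries.C (R := L2) (yz (0) (-1)) * (PowerSeries.C (R := L2) (yz (-(t:ℤ)) (0)) * PowerSeries.C (R := L2) (yz (0) (-(t:ℤ)))) - PowerSeries.C (R := L2) (yz (-2*(s:ℤ)-1) (0)) * PowerSeries.C (R := L2) (yz (0) (1)) * (PowerSeries.C (R := L2) (yz ((t:ℤ))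 (0)) * PowerSeries.C (R := L2) (yz (0) ((t:ℤ)))) + PowerSeries.C (R := L2) (yz (-2*(s:ℤ)-1) (0)) * PowerSeries.C (R := L2) (yz (0) (-1)) * (PowerSeries.C (R := L2) (yz ((t:ℤ)) (0)) * PowerSeries.C (R := L2) (yz (0) (-(t:ℤ)))))
      + X^t * X * (PowerSeries.C (R := L2) (yz (2*(s:ℤ)+1) (0)) * PowerSeries.C (R := L2) (yz (0) (1)) * (PowerSeries.C (R := L2) (yz (-(t:ℤ)) (0)) * PowerSeries.C (R := L2) (yz (0) ((t:ℤ)))) * (PowerSeries.C (R := L2) (yz (-1) (0)) * PowerSeries.C (R := L2) (yz (0) (-1))) - PowerSeries.C (R := L2) (yz (2*(s:ℤ)+1) (0)) * PowerSeries.C (R := L2) (yz (0) (-1)) * (PowerSeries.C (R := L2) (yz (-(t:ℤ)) (0)) * PowerSeries.C (R := L2) (yz (0) (-(t:ℤ)))) * (PowerSeries.C (R := L2) (yz (-1) (0)) * PowerSeries.C (R := L2) (yz (0) (1))) - PowerSeries.C (R := L2) (yz (-2*(s:ℤ)-1) (0)) * PowerSeries.C (R := L2) (yz (0) (1)) * (PowerSeries.C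 (R := L2) (yz ((t:ℤ)) (0)) * PowerSeries.C (R := L2) (yz (0) ((t:ℤ)))) * (PowerSeries.C (R := L2) (yz (1) (0)) * PowerSeries.C (R := L2) (yz (0) (-1))) + PowerSeries.C (R := L2) (yz (-2*(s:ℤ)-1) (0)) * PowerSeries.C (R := L2) (yz (0) (-1)) * (PowerSeries.C (R := L2) (yz ((t:ℤ)) (0)) * PowerSeries.C (R := L2) (yz (0) (-(t:ℤ)))) * (PowerSeries.C (R := L2) (yz (1) (0)) * PowerSeries.C (R := L2) (yz (0) (1)))) := by
  have h2t : t ≤ 2*s := by omega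
  have h2t1 : t + 1 ≤ 2*s := by omega
  have p1 : PowerSeries.C (R := L2) (yz (2*(s:ℤ)+1) (0)) * PowerSeries.C (R := L2) (yz (0) (1)) = PowerSeries.C (R := L2) (yz (((2*s : ℕ) : ℤ) + 1) (((0:ℕ) : ℤ) + 1)) := by
    rw [← map_mul, yz_mul]
    exact Cyz_eq _ _ _ _ (by omega) (by omega)
  have p2 : PowerSeries.C (R := L2) (yz (2*(s:ℤ)+1) (0)) * PowerSeries.C (R := L2) (yz (0) (-1)) = PowerSeries.C (R := L2) (yz (((2*s : ℕ) : ℤ) + 1) (-((0:ℕ) : ℤ) - 1)) := by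
    rw [← map_mul, yz_mul]
    exact Cyz_eq _ _ _ _ (by omega) (by omega)
  have p3 : PowerSeries.C (R := L2) (yz (-2*(s:ℤ)-1) (0)) * PowerSeries.C (R := L2) (yz (0) (1)) = PowerSeries.C (R := L2) (yz (-((2*s : ℕ) : ℤ) - 1) (((0:ℕ) : ℤ) + 1)) := by
    rw [← map_mul, yz_mul]
    exact Cyz_eq _ _ _ _ (by omega) (by omega)
  have p4 : PowerSeries.C (R := L2) (yz (-2*(s:ℤ)-1) (0)) * PowerSeries.C (R := L2) (yz (0) (-1)) = PowerSeries.C (R := L2) (yz (-((2*s : ℕ) : ℤ) - 1) (-((0:ℕ) : ℤ) - 1)) := by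
    rw [← map_mul, yz_mul]
    exact Cyz_eq _ _ _ _ (by omega) (by omega)
  have p5 : PowerSeries.C (R := L2) (yz (2*(s:ℤ)+1) (0)) * PowerSeries.C (R := L2) (yz (0) (1)) * PowerSeries.C (R := L2) (yz (-(t:ℤ)) (0)) * PowerSeries.C (R := L2) (yz (0) ((t:ℤ))) = PowerSeries.C (R := L2) (yz (((2*s - t : ℕ) : ℤ) + 1) (((t : ℕ) : ℤ) + 1)) := by
    rw [← map_mul, ← map_mul, ← map_mul, yz_mul, yz_mul, yz_mul]
    exact Cyz_eq _ _ _ _ (by omega) (by omega)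
  have p6 : PowerSeries.C (R := L2) (yz (2*(s:ℤ)+1) (0)) * PowerSeries.C (R := L2) (yz (0) (-1)) * PowerSeries.C (R := L2) (yz (-(t:ℤ)) (0)) * PowerSeries.C (R := L2) (yz (0) (-(t:ℤ))) = PowerSeries.C (R := L2) (yz (((2*s - t : ℕ) : ℤ) + 1) (-((t : ℕ) : ℤ) - 1)) := by
    rw [← map_mul, ← map_mul, ← map_mul, yz_mul, yz_mul, yz_mul]
    exact Cyz_eq _ _ _ _ (by omega) (by omega)
  have p7 : PowerSeries.C (R := L2) (yz (-2*(s:ℤ)-1) (0)) * PowerSeries.C (R := L2) (yz (0) (1)) * PowerSeries.C (R := L2) (yz ((t:ℤ)) (0)) * PowerSeries.C (R := L2) (yz (0) ((t:ℤ))) = PowerSeries.C (R := L2) (yz (-((2*s - t : ℕ) : ℤ) - 1) (((t : ℕ) : ℤ) + 1)) := by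
    rw [← map_mul, ← map_mul, ← map_mul, yz_mul, yz_mul, yz_mul]
    exact Cyz_eq _ _ _ _ (by omega) (by omega)
  have p8 : PowerSeries.C (R := L2) (yz (-2*(s:ℤ)-1) (0)) * PowerSeries.C (R := L2) (yz (0) (-1)) * PowerSeries.C (R := L2) (yz ((t:ℤ)) (0)) * PowerSeries.C (R := L2) (yz (0) (-(t:ℤ))) = PowerSeries.C (R := L2) (yz (-((2*s - t : ℕ) : ℤ) - 1) (-((t : ℕ) : ℤ) - 1)) := by
    rw [← map_mul, ← map_mul, ← map_mul, yz_mul, yz_mul, yz_mul]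
    exact Cyz_eq _ _ _ _ (by omega) (by omega)
  have p9 : PowerSeries.C (R := L2) (yz (2*(s:ℤ)+1) (0)) * PowerSeries.C (R := L2) (yz (0) (1)) * PowerSeries.C (R := L2) (yz (-(t:ℤ)) (0)) * PowerSeries.C (R := L2) (yz (0) ((t:ℤ))) * PowerSeries.C (R := L2) (yz (-1) (0)) * PowerSeries.C (R := L2) (yz (0) (-1)) = PowerSeries.C (R := L2) (yz (((2*s - t - 1 : ℕ) : ℤ) + 1) (((t - 1 : ℕ) : ℤ) + 1)) := by
    rw [← map_mul, ← map_mul, ← map_mul, ← map_mul, ← map_mul, yz_mul, yz_mul, yz_mul, yz_mul, yz_mul]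
    exact Cyz_eq _ _ _ _ (by omega) (by omega)
  have p10 : PowerSeries.C (R := L2) (yz (2*(s:ℤ)+1) (0)) * PowerSeries.C (R := L2) (yz (0) (-1)) * PowerSeries.C (R := L2) (yz (-(t:ℤ)) (0)) * PowerSeries.C (R := L2) (yz (0) (-(t:ℤ))) * PowerSeries.C (R := L2) (yz (-1) (0)) * PowerSeries.C (R := L2) (yz (0) (1)) = PowerSeries.C (R := L2) (yz (((2*s - t - 1 : ℕ) : ℤ) + 1) (-((t - 1 : ℕ) : ℤ) - 1)) := by
    rw [← map_mul, ← map_mul, ← map_mul, ← map_mul, ← map_mul, yz_mul, yz_mul, yz_mul, yz_mul, yz_mul]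
    exact Cyz_eq _ _ _ _ (by omega) (by omega)
  have p11 : PowerSeries.C (R := L2) (yz (-2*(s:ℤ)-1) (0)) * PowerSeries.C (R := L2) (yz (0) (1)) * PowerSeries.C (R := L2) (yz ((t:ℤ)) (0)) * PowerSeries.C (R := L2) (yz (0) ((t:ℤ))) * PowerSeries.C (R := L2) (yz (1) (0)) * PowerSeries.C (R := L2) (yz (0) (-1)) = PowerSeries.C (R := L2) (yz (-((2*s - t - 1 : ℕ) : ℤ) - 1) (((t - 1 : ℕ) : ℤ) + 1)) := by
    rw [← map_mul, ← map_mul, ← map_mul, ← map_mul, ← map_mul, yz_mul, yz_mul, yz_mul, yz_mul, yz_mul]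
    exact Cyz_eq _ _ _ _ (by omega) (by omega)
  have p12 : PowerSeries.C (R := L2) (yz (-2*(s:ℤ)-1) (0)) * PowerSeries.C (R := L2) (yz (0) (-1)) * PowerSeries.C (R := L2) (yz ((t:ℤ)) (0)) * PowerSeries.C (R := L2) (yz (0) (-(t:ℤ))) * PowerSeries.C (R := L2) (yz (1) (0)) * PowerSeries.C (R := L2) (yz (0) (1)) = PowerSeries.C (R := L2) (yz (-((2*s - t - 1 : ℕ) : ℤ) - 1) (-((t - 1 : ℕ) : ℤ) - 1)) := by
    rw [← map_mul, ← map_mul, ← map_mul, ← map_mul, ← map_mul, yz_mul, yz_mul, yz_mul, yz_mul, yz_mul]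
    exact Cyz_eq _ _ _ _ (by omega) (by omega)
  have h0 : PowerSeries.C (R := L2) (chiY (2 * s)) = PowerSeries.C (R := L2) (chiY (2 * s) * chiZv 0) := by
    rw [chiZv_zero, mul_one]
  rw [h0]
  have hexp : PowerSeries.C (R := L2) dlt *
      (PowerSeries.C (R := L2) (chiY (2 * s) * chiZv 0) -
        PowerSeries.C (R := L2) (chiY (2 * s - t) * chiZv t) * PowerSeries.X ^ t +
        PowerSeries.C (R := L2) (chiY (2 * s - t - 1) * chiZv (t - 1)) * PowerSeries.X ^ (t + 1)) =
      PowerSeries.C (R := L2) (dlt * (chiY (2 * s) * chiZv 0))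
        - PowerSeries.C (R := L2) (dlt * (chiY (2 * s - t) * chiZv t)) * X ^ t
        + PowerSeries.C (R := L2) (dlt * (chiY (2 * s - t - 1) * chiZv (t - 1))) * X ^ (t + 1) := by
    simp only [map_mul]; ring
  rw [hexp, dlt_mul_chi, dlt_mul_chi, dlt_mul_chi]
  simp only [map_add, map_sub]
  linear_combination (-1 : PowerSeries L2) * p1 + p2 + p3 - p4
    + X^t * p5 - X^t * p6 - X^t * p7 + X^t * p8
    - X^t*X * p9 + X^t*X * p10 + X^t*X * p11 - X^t*X * p12

set_option maxHeartbeats 1000000 in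
theorem keyRing {Rc : Type*} [CommRing Rc]
    (y y2 z z2 Ys Ys2 Yt Yt2 Zt Zt2 X Xt S1 S2 S3 S4 R1 R2 R3 R4 : Rc)
    (hy : y*y2 = 1) (hz : z*z2 = 1)
    (hS1 : (1 - y*z*X) * S1 = 1 - Yt*Zt*Xt)
    (hS2 : (1 - y*z2*X) * S2 = 1 - Yt*Zt2*Xt)
    (hS3 : (1 - y2*z*X) * S3 = 1 - Yt2*Zt*Xt)
    (hS4 : (1 - y2*z2*X) * S4 = 1 - Yt2*Zt2*Xt)
    (hR1 : (y*z - X) * R1 = Yt*Zt*Xt*X - Xt*Xt*X)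
    (hR2 : (y*z2 - X) * R2 = Yt*Zt2*Xt*X - Xt*Xt*X)
    (hR3 : (y2*z - X) * R3 = Yt2*Zt*Xt*X - Xt*Xt*X)
    (hR4 : (y2*z2 - X) * R4 = Yt2*Zt2*Xt*X - Xt*Xt*X)
    :
    (y*z - X)*(y*z2 - X)*(y2*z - X)*(y2*z2 - X) *
      ( Ys*z * ((1 - y*z2*X)*(1 - y2*z*X)*(1 - y2*z2*X)) * (S3 - R3)
        - Ys*z2 * ((1 - y*z*X)*(1 - y2*z*X)*(1 - y2*z2*X)) * (S4 - R4)
        - Ys2*z * ((1 - y*z*X)*(1 - y*z2*X)*(1 - y2*z2*X)) * (S1 - R1)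
        + Ys2*z2 * ((1 - y*z*X)*(1 - y*z2*X)*(1 - y2*z*X)) * (S2 - R2) )
    = (y*z - X)*(y*z2 - X)*(y2*z - X)*(y2*z2 - X) * (1 - X^2) *
      ( (Ys*z - Ys*z2 - Ys2*z + Ys2*z2)
        - Xt * (Ys*z*(Yt2*Zt) - Ys*z2*(Yt2*Zt2) - Ys2*z*(Yt*Zt) + Ys2*z2*(Yt*Zt2))
        + Xt*X * (Ys*z*(Yt2*Zt)*(y2*z2) - Ys*z2*(Yt2*Zt2)*(y2*z) - Ys2*z*(Yt*Zt)*(y*z2) + Ys2*z2*(Yt*Zt2)*(y*z)) ) := by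
  linear_combination
    (Ys*z) * ((1 - y*z2*X)*(1 - y2*z2*X)*(y*z - X)*(y*z2 - X)*(y2*z2 - X)) * ((y2*z - X)) * hS3
    - (Ys*z) * ((1 - y*z2*X)*(1 - y2*z2*X)*(y*z - X)*(y*z2 - X)*(y2*z2 - X)) * ((1 - y2*z*X)) * hR3
    - (Ys*z2) * ((1 - y*z*X)*(1 - y2*z*X)*(y*z - X)*(y*z2 - X)*(y2*z - X)) * ((y2*z2 - X)) * hS4
    + (Ys*z2) * ((1 - y*z*X)*(1 - y2*z*X)*(y*z - X)*(y*z2 - X)*(y2*z - X)) * ((1 - y2*z2*X)) * hR4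
    - (Ys2*z) * ((1 - y*z2*X)*(1 - y2*z2*X)*(y*z2 - X)*(y2*z - X)*(y2*z2 - X)) * ((y*z - X)) * hS1
    + (Ys2*z) * ((1 - y*z2*X)*(1 - y2*z2*X)*(y*z2 - X)*(y2*z - X)*(y2*z2 - X)) * ((1 - y*z*X)) * hR1
    + (Ys2*z2) * ((1 - y*z*X)*(1 - y2*z*X)*(y*z - X)*(y2*z - X)*(y2*z2 - X)) * ((y*z2 - X)) * hS2
    - (Ys2*z2) * ((1 - y*z*X)*(1 - y2*z*X)*(y*z - X)*(y2*z - X)*(y2*z2 - X)) * ((1 - y*z2*X)) * hR2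
    + (z2^3*Ys2*X^4 - z2^3*Ys2*X^4*Xt^2 - z2^3*Ys*X^4 + z2^3*Ys*X^4*Xt^2 + z*z2^2*Ys2*X^4 - z*z2^2*Ys2*X^6 + z*z2^2*Ys2*Yt*Zt2*X^2*Xt - z*z2^2*Ys2*Yt*Zt2*X^4*Xt - z*z2^2*Ys2*Yt*Zt*X^2*Xt + z*z2^2*Ys2*Yt*Zt*X^6*Xt - z*z2^2*Ys*X^4 + z*z2^2*Ys*X^6 - z*z2^2*Ys*Yt2*Zt2*X^2*Xt + z*z2^2*Ys*Yt2*Zt2*X^4*Xt + z*z2^2*Ys*Yt2*Zt*X^2*Xt - z*z2^2*Ys*Yt2*Zt*X^6*Xt - z*z2^4*Ys2*X^4 + z*z2^4*Ys2*X^4*Xt^2 + z*z2^4*Ys*X^4 - z*z2^4*Ys*X^4*Xt^2 - z^2*z2*Ys2*X^4 + z^2*z2*Ys2*X^6 + z^2*z2*Ys2*Yt*Zt2*X^2*Xt - z^2*z2*Ys2*Yt*Zt2*X^6*Xt - z^2*z2*Ys2*Yt*Zt*X^2*Xt + z^2*z2*Ys2*Yt*Zt*X^4*Xt + z^2*z2*Ys*X^4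 - z^2*z2*Ys*X^6 - z^2*z2*Ys*Yt2*Zt2*X^2*Xt + z^2*z2*Ys*Yt2*Zt2*X^6*Xt + z^2*z2*Ys*Yt2*Zt*X^2*Xt - z^2*z2*Ys*Yt2*Zt*X^4*Xt + z^2*z2^3*Ys2*X^2 - z^2*z2^3*Ys2*X^4 - z^2*z2^3*Ys2*Yt*Zt2*X^2*Xt + z^2*z2^3*Ys2*Yt*Zt2*X^6*Xt + z^2*z2^3*Ys2*Yt*Zt*X^4*Xt - z^2*z2^3*Ys2*Yt*Zt*X^6*Xt - z^2*z2^3*Ys*X^2 + z^2*z2^3*Ys*X^4 + z^2*z2^3*Ys*Yt2*Zt2*X^2*Xt - z^2*z2^3*Ys*Yt2*Zt2*X^6*Xt - z^2*z2^3*Ys*Yt2*Zt*X^4*Xt + z^2*z2^3*Ys*Yt2*Zt*X^6*Xt - z^3*Ys2*X^4 + z^3*Ys2*X^4*Xt^2 + z^3*Ys*X^4 - z^3*Ys*X^4*Xt^2 - z^3*z2^2*Ys2*X^2 + z^3*z2^2*Ys2*X^4 - z^3*z2^2*Ys2*Yt*Zt2*X^4*Xt + z^3*z2^2*Ys2*Yt*Zt2*X^6*Xt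 + z^3*z2^2*Ys2*Yt*Zt*X^2*Xt - z^3*z2^2*Ys2*Yt*Zt*X^6*Xt + z^3*z2^2*Ys*X^2 - z^3*z2^2*Ys*X^4 + z^3*z2^2*Ys*Yt2*Zt2*X^4*Xt - z^3*z2^2*Ys*Yt2*Zt2*X^6*Xt - z^3*z2^2*Ys*Yt2*Zt*X^2*Xt + z^3*z2^2*Ys*Yt2*Zt*X^6*Xt - z^3*z2^4*Ys2*X^2 + z^3*z2^4*Ys2*X^4*Xt^2 + z^3*z2^4*Ys2*Yt*Zt*X^2*Xt - z^3*z2^4*Ys2*Yt*Zt*X^4*Xt + z^3*z2^4*Ys*X^2 - z^3*z2^4*Ys*X^4*Xt^2 - z^3*z2^4*Ys*Yt2*Zt*X^2*Xt + z^3*z2^4*Ys*Yt2*Zt*X^4*Xt + z^4*z2*Ys2*X^4 - z^4*z2*Ys2*X^4*Xt^2 - z^4*z2*Ys*X^4 + z^4*z2*Ys*X^4*Xt^2 + z^4*z2^3*Ys2*X^2 - z^4*z2^3*Ys2*X^4*Xt^2 - z^4*z2^3*Ys2*Yt*Zt2*X^2*Xt + z^4*z2^3*Ys2*Yt*Zt2*X^4*Xt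 - z^4*z2^3*Ys*X^2 + z^4*z2^3*Ys*X^4*Xt^2 + z^4*z2^3*Ys*Yt2*Zt2*X^2*Xt - z^4*z2^3*Ys*Yt2*Zt2*X^4*Xt - y2*z*z2^3*Ys2*X^3 + y2*z*z2^3*Ys2*X^5 + y2*z*z2^3*Ys2*Yt*Zt2*X^3*Xt - y2*z*z2^3*Ys2*Yt*Zt2*X^5*Xt + y2*z*z2^3*Ys*X^3 - y2*z*z2^3*Ys*X^5 - y2*z*z2^3*Ys*Yt2*Zt*X^3*Xt + y2*z*z2^3*Ys*Yt2*Zt*X^5*Xt - y2*z^2*z2^2*Ys2*Yt*Zt2*X*Xt + y2*z^2*z2^2*Ys2*Yt*Zt2*X^3*Xt + y2*z^2*z2^2*Ys2*Yt*Zt*X*Xt - y2*z^2*z2^2*Ys2*Yt*Zt*X^3*Xt - y2*z^2*z2^2*Ys*Yt2*Zt2*X^5*Xt + y2*z^2*z2^2*Ys*Yt2*Zt2*X^7*Xt + y2*z^2*z2^2*Ys*Yt2*Zt*X^5*Xt - y2*z^2*z2^2*Ys*Yt2*Zt*X^7*Xt + y2*z^2*z2^4*Ys2*X^3 - y2*z^2*z2^4*Ys2*X^3*Xt^2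 - y2*z^2*z2^4*Ys*X^3 + y2*z^2*z2^4*Ys*X^5*Xt^2 + y2*z^2*z2^4*Ys*Yt2*Zt*X^3*Xt - y2*z^2*z2^4*Ys*Yt2*Zt*X^5*Xt + y2*z^3*z2*Ys2*X^3 - y2*z^3*z2*Ys2*X^5 - y2*z^3*z2*Ys2*Yt*Zt*X^3*Xt + y2*z^3*z2*Ys2*Yt*Zt*X^5*Xt - y2*z^3*z2*Ys*X^3 + y2*z^3*z2*Ys*X^5 + y2*z^3*z2*Ys*Yt2*Zt2*X^3*Xt - y2*z^3*z2*Ys*Yt2*Zt2*X^5*Xt + y2*z^3*z2^3*Ys2*Yt*Zt2*X*Xt - y2*z^3*z2^3*Ys2*Yt*Zt2*X^5*Xt - y2*z^3*z2^3*Ys2*Yt*Zt*X*Xt + y2*z^3*z2^3*Ys2*Yt*Zt*X^5*Xt - y2*z^3*z2^3*Ys*Yt2*Zt2*X^3*Xt + y2*z^3*z2^3*Ys*Yt2*Zt2*X^5*Xt + y2*z^3*z2^3*Ys*Yt2*Zt*X^3*Xt - y2*z^3*z2^3*Ys*Yt2*Zt*X^5*Xt - y2*z^4*z2^2*Ys2*X^3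 + y2*z^4*z2^2*Ys2*X^3*Xt^2 + y2*z^4*z2^2*Ys*X^3 - y2*z^4*z2^2*Ys*X^5*Xt^2 - y2*z^4*z2^2*Ys*Yt2*Zt2*X^3*Xt + y2*z^4*z2^2*Ys*Yt2*Zt2*X^5*Xt + y2^2*z^2*z2^3*Ys2*X^2*Xt^2 - y2^2*z^2*z2^3*Ys2*X^4 - y2^2*z^2*z2^3*Ys2*Yt*Zt2*X^2*Xt + y2^2*z^2*z2^3*Ys2*Yt*Zt2*X^4*Xt + y2^2*z^2*z2^3*Ys*X^4 - y2^2*z^2*z2^3*Ys*X^6*Xt^2 - y2^2*z^2*z2^3*Ys*Yt2*Zt*X^4*Xt + y2^2*z^2*z2^3*Ys*Yt2*Zt*X^6*Xt - y2^2*z^3*z2^2*Ys2*X^2*Xt^2 + y2^2*z^3*z2^2*Ys2*X^4 + y2^2*z^3*z2^2*Ys2*Yt*Zt*X^2*Xt - y2^2*z^3*z2^2*Ys2*Yt*Zt*X^4*Xt - y2^2*z^3*z2^2*Ys*X^4 + y2^2*z^3*z2^2*Ys*X^6*Xt^2 + y2^2*z^3*z2^2*Ys*Yt2*Zt2*X^4*Xt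 - y2^2*z^3*z2^2*Ys*Yt2*Zt2*X^6*Xt - y*z*z2^3*Ys2*X^3 + y*z*z2^3*Ys2*X^5 + y*z*z2^3*Ys2*Yt*Zt*X^3*Xt - y*z*z2^3*Ys2*Yt*Zt*X^5*Xt + y*z*z2^3*Ys*X^3 - y*z*z2^3*Ys*X^5 - y*z*z2^3*Ys*Yt2*Zt2*X^3*Xt + y*z*z2^3*Ys*Yt2*Zt2*X^5*Xt + y*z^2*z2^2*Ys2*Yt*Zt2*X^5*Xt - y*z^2*z2^2*Ys2*Yt*Zt2*X^7*Xt - y*z^2*z2^2*Ys2*Yt*Zt*X^5*Xt + y*z^2*z2^2*Ys2*Yt*Zt*X^7*Xt + y*z^2*z2^2*Ys*Yt2*Zt2*X*Xt - y*z^2*z2^2*Ys*Yt2*Zt2*X^3*Xt - y*z^2*z2^2*Ys*Yt2*Zt*X*Xt + y*z^2*z2^2*Ys*Yt2*Zt*X^3*Xt + y*z^2*z2^4*Ys2*X^3 - y*z^2*z2^4*Ys2*X^5*Xt^2 - y*z^2*z2^4*Ys2*Yt*Zt*X^3*Xt + y*z^2*z2^4*Ys2*Yt*Zt*X^5*Xt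 - y*z^2*z2^4*Ys*X^3 + y*z^2*z2^4*Ys*X^3*Xt^2 + y*z^3*z2*Ys2*X^3 - y*z^3*z2*Ys2*X^5 - y*z^3*z2*Ys2*Yt*Zt2*X^3*Xt + y*z^3*z2*Ys2*Yt*Zt2*X^5*Xt - y*z^3*z2*Ys*X^3 + y*z^3*z2*Ys*X^5 + y*z^3*z2*Ys*Yt2*Zt*X^3*Xt - y*z^3*z2*Ys*Yt2*Zt*X^5*Xt + y*z^3*z2^3*Ys2*Yt*Zt2*X^3*Xt - y*z^3*z2^3*Ys2*Yt*Zt2*X^5*Xt - y*z^3*z2^3*Ys2*Yt*Zt*X^3*Xt + y*z^3*z2^3*Ys2*Yt*Zt*X^5*Xt - y*z^3*z2^3*Ys*Yt2*Zt2*X*Xt + y*z^3*z2^3*Ys*Yt2*Zt2*X^5*Xt + y*z^3*z2^3*Ys*Yt2*Zt*X*Xt - y*z^3*z2^3*Ys*Yt2*Zt*X^5*Xt - y*z^4*z2^2*Ys2*X^3 + y*z^4*z2^2*Ys2*X^5*Xt^2 + y*z^4*z2^2*Ys2*Yt*Zt2*X^3*Xt - y*z^4*z2^2*Ys2*Yt*Zt2*X^5*Xt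 + y*z^4*z2^2*Ys*X^3 - y*z^4*z2^2*Ys*X^3*Xt^2 - y*y2*z*z2^4*Ys2*X^4 + y*y2*z*z2^4*Ys2*X^4*Xt^2 + y*y2*z*z2^4*Ys*X^4 - y*y2*z*z2^4*Ys*X^4*Xt^2 + y*y2*z^2*z2^3*Ys2*X^2 - y*y2*z^2*z2^3*Ys2*X^4 - y*y2*z^2*z2^3*Ys2*Yt*Zt2*X^2*Xt + y*y2*z^2*z2^3*Ys2*Yt*Zt2*X^6*Xt + y*y2*z^2*z2^3*Ys2*Yt*Zt*X^4*Xt - y*y2*z^2*z2^3*Ys2*Yt*Zt*X^6*Xt - y*y2*z^2*z2^3*Ys*X^2 + y*y2*z^2*z2^3*Ys*X^4 + y*y2*z^2*z2^3*Ys*Yt2*Zt2*X^2*Xt - y*y2*z^2*z2^3*Ys*Yt2*Zt2*X^6*Xt - y*y2*z^2*z2^3*Ys*Yt2*Zt*X^4*Xt + y*y2*z^2*z2^3*Ys*Yt2*Zt*X^6*Xt - y*y2*z^3*z2^2*Ys2*X^2 + y*y2*z^3*z2^2*Ys2*X^4 - y*y2*z^3*z2^2*Ys2*Yt*Zt2*X^4*Xt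 + y*y2*z^3*z2^2*Ys2*Yt*Zt2*X^6*Xt + y*y2*z^3*z2^2*Ys2*Yt*Zt*X^2*Xt - y*y2*z^3*z2^2*Ys2*Yt*Zt*X^6*Xt + y*y2*z^3*z2^2*Ys*X^2 - y*y2*z^3*z2^2*Ys*X^4 + y*y2*z^3*z2^2*Ys*Yt2*Zt2*X^4*Xt - y*y2*z^3*z2^2*Ys*Yt2*Zt2*X^6*Xt - y*y2*z^3*z2^2*Ys*Yt2*Zt*X^2*Xt + y*y2*z^3*z2^2*Ys*Yt2*Zt*X^6*Xt - y*y2*z^3*z2^4*Ys2*X^2 + y*y2*z^3*z2^4*Ys2*X^4*Xt^2 + y*y2*z^3*z2^4*Ys2*Yt*Zt*X^2*Xt - y*y2*z^3*z2^4*Ys2*Yt*Zt*X^4*Xt + y*y2*z^3*z2^4*Ys*X^2 - y*y2*z^3*z2^4*Ys*X^4*Xt^2 - y*y2*z^3*z2^4*Ys*Yt2*Zt*X^2*Xt + y*y2*z^3*z2^4*Ys*Yt2*Zt*X^4*Xt + y*y2*z^4*z2*Ys2*X^4 - y*y2*z^4*z2*Ys2*X^4*Xt^2 - y*y2*z^4*z2*Ys*X^4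 + y*y2*z^4*z2*Ys*X^4*Xt^2 + y*y2*z^4*z2^3*Ys2*X^2 - y*y2*z^4*z2^3*Ys2*X^4*Xt^2 - y*y2*z^4*z2^3*Ys2*Yt*Zt2*X^2*Xt + y*y2*z^4*z2^3*Ys2*Yt*Zt2*X^4*Xt - y*y2*z^4*z2^3*Ys*X^2 + y*y2*z^4*z2^3*Ys*X^4*Xt^2 + y*y2*z^4*z2^3*Ys*Yt2*Zt2*X^2*Xt - y*y2*z^4*z2^3*Ys*Yt2*Zt2*X^4*Xt + y*y2^2*z^2*z2^4*Ys2*X^3 - y*y2^2*z^2*z2^4*Ys2*X^3*Xt^2 - y*y2^2*z^2*z2^4*Ys*X^3 + y*y2^2*z^2*z2^4*Ys*X^5*Xt^2 + y*y2^2*z^2*z2^4*Ys*Yt2*Zt*X^3*Xt - y*y2^2*z^2*z2^4*Ys*Yt2*Zt*X^5*Xt + y*y2^2*z^3*z2^3*Ys2*Yt*Zt2*X*Xt - y*y2^2*z^3*z2^3*Ys2*Yt*Zt2*X^5*Xt - y*y2^2*z^3*z2^3*Ys2*Yt*Zt*X*Xt + y*y2^2*z^3*z2^3*Ys2*Yt*Zt*X^5*Xt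 - y*y2^2*z^3*z2^3*Ys*Yt2*Zt2*X^3*Xt + y*y2^2*z^3*z2^3*Ys*Yt2*Zt2*X^5*Xt + y*y2^2*z^3*z2^3*Ys*Yt2*Zt*X^3*Xt - y*y2^2*z^3*z2^3*Ys*Yt2*Zt*X^5*Xt - y*y2^2*z^4*z2^2*Ys2*X^3 + y*y2^2*z^4*z2^2*Ys2*X^3*Xt^2 + y*y2^2*z^4*z2^2*Ys*X^3 - y*y2^2*z^4*z2^2*Ys*X^5*Xt^2 - y*y2^2*z^4*z2^2*Ys*Yt2*Zt2*X^3*Xt + y*y2^2*z^4*z2^2*Ys*Yt2*Zt2*X^5*Xt - y^2*z^2*z2^3*Ys2*X^4 + y^2*z^2*z2^3*Ys2*X^6*Xt^2 + y^2*z^2*z2^3*Ys2*Yt*Zt*X^4*Xt - y^2*z^2*z2^3*Ys2*Yt*Zt*X^6*Xt - y^2*z^2*z2^3*Ys*X^2*Xt^2 + y^2*z^2*z2^3*Ys*X^4 + y^2*z^2*z2^3*Ys*Yt2*Zt2*X^2*Xt - y^2*z^2*z2^3*Ys*Yt2*Zt2*X^4*Xt + y^2*z^3*z2^2*Ys2*X^4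 - y^2*z^3*z2^2*Ys2*X^6*Xt^2 - y^2*z^3*z2^2*Ys2*Yt*Zt2*X^4*Xt + y^2*z^3*z2^2*Ys2*Yt*Zt2*X^6*Xt + y^2*z^3*z2^2*Ys*X^2*Xt^2 - y^2*z^3*z2^2*Ys*X^4 - y^2*z^3*z2^2*Ys*Yt2*Zt*X^2*Xt + y^2*z^3*z2^2*Ys*Yt2*Zt*X^4*Xt + y^2*y2*z^2*z2^4*Ys2*X^3 - y^2*y2*z^2*z2^4*Ys2*X^5*Xt^2 - y^2*y2*z^2*z2^4*Ys2*Yt*Zt*X^3*Xt + y^2*y2*z^2*z2^4*Ys2*Yt*Zt*X^5*Xt - y^2*y2*z^2*z2^4*Ys*X^3 + y^2*y2*z^2*z2^4*Ys*X^3*Xt^2 + y^2*y2*z^3*z2^3*Ys2*Yt*Zt2*X^3*Xt - y^2*y2*z^3*z2^3*Ys2*Yt*Zt2*X^5*Xt - y^2*y2*z^3*z2^3*Ys2*Yt*Zt*X^3*Xt + y^2*y2*z^3*z2^3*Ys2*Yt*Zt*X^5*Xt - y^2*y2*z^3*z2^3*Ys*Yt2*Zt2*X*Xt + y^2*y2*z^3*z2^3*Ys*Yt2*Zt2*X^5*Xt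 + y^2*y2*z^3*z2^3*Ys*Yt2*Zt*X*Xt - y^2*y2*z^3*z2^3*Ys*Yt2*Zt*X^5*Xt - y^2*y2*z^4*z2^2*Ys2*X^3 + y^2*y2*z^4*z2^2*Ys2*X^5*Xt^2 + y^2*y2*z^4*z2^2*Ys2*Yt*Zt2*X^3*Xt - y^2*y2*z^4*z2^2*Ys2*Yt*Zt2*X^5*Xt + y^2*y2*z^4*z2^2*Ys*X^3 - y^2*y2*z^4*z2^2*Ys*X^3*Xt^2 - y^2*y2^2*z^3*z2^4*Ys2*X^2 + y^2*y2^2*z^3*z2^4*Ys2*X^4*Xt^2 + y^2*y2^2*z^3*z2^4*Ys2*Yt*Zt*X^2*Xt - y^2*y2^2*z^3*z2^4*Ys2*Yt*Zt*X^4*Xt + y^2*y2^2*z^3*z2^4*Ys*X^2 - y^2*y2^2*z^3*z2^4*Ys*X^4*Xt^2 - y^2*y2^2*z^3*z2^4*Ys*Yt2*Zt*X^2*Xt + y^2*y2^2*z^3*z2^4*Ys*Yt2*Zt*X^4*Xt + y^2*y2^2*z^4*z2^3*Ys2*X^2 - y^2*y2^2*z^4*z2^3*Ys2*X^4*Xt^2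 - y^2*y2^2*z^4*z2^3*Ys2*Yt*Zt2*X^2*Xt + y^2*y2^2*z^4*z2^3*Ys2*Yt*Zt2*X^4*Xt - y^2*y2^2*z^4*z2^3*Ys*X^2 + y^2*y2^2*z^4*z2^3*Ys*X^4*Xt^2 + y^2*y2^2*z^4*z2^3*Ys*Yt2*Zt2*X^2*Xt - y^2*y2^2*z^4*z2^3*Ys*Yt2*Zt2*X^4*Xt) * hy
    + (z2*Ys2*X^4*Xt^2 - z2*Ys2*X^6 - z2*Ys2*Yt*Zt2*X^4*Xt + z2*Ys2*Yt*Zt2*X^6*Xt - z2*Ys*X^4*Xt^2 + z2*Ys*X^6 + z2*Ys*Yt2*Zt2*X^4*Xt - z2*Ys*Yt2*Zt2*X^6*Xt - z2^3*Ys2*X^4 + z2^3*Ys2*X^4*Xt^2 + z2^3*Ys*X^4 - z2^3*Ys*X^4*Xt^2 - z*Ys2*X^4*Xt^2 + z*Ys2*X^6 + z*Ys2*Yt*Zt*X^4*Xt - z*Ys2*Yt*Zt*X^6*Xt + z*Ys*X^4*Xt^2 - z*Ys*X^6 - z*Ys*Yt2*Zt*X^4*Xt + z*Ys*Yt2*Zt*X^6*Xt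 - z*z2^2*Ys2*X^4 + z*z2^2*Ys2*X^4*Xt^2 - z*z2^2*Ys2*Yt*Zt2*X^2*Xt + z*z2^2*Ys2*Yt*Zt2*X^6*Xt + z*z2^2*Ys2*Yt*Zt*X^2*Xt - z*z2^2*Ys2*Yt*Zt*X^6*Xt + z*z2^2*Ys*X^4 - z*z2^2*Ys*X^4*Xt^2 + z*z2^2*Ys*Yt2*Zt2*X^2*Xt - z*z2^2*Ys*Yt2*Zt2*X^6*Xt - z*z2^2*Ys*Yt2*Zt*X^2*Xt + z*z2^2*Ys*Yt2*Zt*X^6*Xt + z^2*z2*Ys2*X^4 - z^2*z2*Ys2*X^4*Xt^2 - z^2*z2*Ys2*Yt*Zt2*X^2*Xt + z^2*z2*Ys2*Yt*Zt2*X^6*Xt + z^2*z2*Ys2*Yt*Zt*X^2*Xt - z^2*z2*Ys2*Yt*Zt*X^6*Xt - z^2*z2*Ys*X^4 + z^2*z2*Ys*X^4*Xt^2 + z^2*z2*Ys*Yt2*Zt2*X^2*Xt - z^2*z2*Ys*Yt2*Zt2*X^6*Xt - z^2*z2*Ys*Yt2*Zt*X^2*Xt + z^2*z2*Ys*Yt2*Zt*X^6*Xt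 - z^2*z2^3*Ys2*X^2 + z^2*z2^3*Ys2*X^4*Xt^2 + z^2*z2^3*Ys2*Yt*Zt*X^2*Xt - z^2*z2^3*Ys2*Yt*Zt*X^4*Xt + z^2*z2^3*Ys*X^2 - z^2*z2^3*Ys*X^4*Xt^2 - z^2*z2^3*Ys*Yt2*Zt*X^2*Xt + z^2*z2^3*Ys*Yt2*Zt*X^4*Xt + z^3*Ys2*X^4 - z^3*Ys2*X^4*Xt^2 - z^3*Ys*X^4 + z^3*Ys*X^4*Xt^2 + z^3*z2^2*Ys2*X^2 - z^3*z2^2*Ys2*X^4*Xt^2 - z^3*z2^2*Ys2*Yt*Zt2*X^2*Xt + z^3*z2^2*Ys2*Yt*Zt2*X^4*Xt - z^3*z2^2*Ys*X^2 + z^3*z2^2*Ys*X^4*Xt^2 + z^3*z2^2*Ys*Yt2*Zt2*X^2*Xt - z^3*z2^2*Ys*Yt2*Zt2*X^4*Xt - y2*z2^2*Ys2*X^3*Xt^2 + y2*z2^2*Ys2*X^5 + y2*z2^2*Ys2*Yt*Zt2*X^3*Xt - y2*z2^2*Ys2*Yt*Zt2*X^5*Xt - y2*z2^2*Ys*X^5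 + y2*z2^2*Ys*X^5*Xt^2 + y2*z*z2*Ys2*Yt*Zt2*X^3*Xt - y2*z*z2*Ys2*Yt*Zt2*X^5*Xt - y2*z*z2*Ys2*Yt*Zt*X^3*Xt + y2*z*z2*Ys2*Yt*Zt*X^5*Xt - y2*z*z2*Ys*Yt2*Zt2*X^3*Xt + y2*z*z2*Ys*Yt2*Zt2*X^7*Xt + y2*z*z2*Ys*Yt2*Zt*X^3*Xt - y2*z*z2*Ys*Yt2*Zt*X^7*Xt + y2*z*z2^3*Ys2*X^3 - y2*z*z2^3*Ys2*X^3*Xt^2 - y2*z*z2^3*Ys*X^3 + y2*z*z2^3*Ys*X^5*Xt^2 + y2*z*z2^3*Ys*Yt2*Zt*X^3*Xt - y2*z*z2^3*Ys*Yt2*Zt*X^5*Xt + y2*z^2*Ys2*X^3*Xt^2 - y2*z^2*Ys2*X^5 - y2*z^2*Ys2*Yt*Zt*X^3*Xt + y2*z^2*Ys2*Yt*Zt*X^5*Xt + y2*z^2*Ys*X^5 - y2*z^2*Ys*X^5*Xt^2 + y2*z^2*z2^2*Ys2*Yt*Zt2*X*Xt - y2*z^2*z2^2*Ys2*Yt*Zt2*X^5*Xt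 - y2*z^2*z2^2*Ys2*Yt*Zt*X*Xt + y2*z^2*z2^2*Ys2*Yt*Zt*X^5*Xt - y2*z^2*z2^2*Ys*Yt2*Zt2*X^3*Xt + y2*z^2*z2^2*Ys*Yt2*Zt2*X^5*Xt + y2*z^2*z2^2*Ys*Yt2*Zt*X^3*Xt - y2*z^2*z2^2*Ys*Yt2*Zt*X^5*Xt - y2*z^3*z2*Ys2*X^3 + y2*z^3*z2*Ys2*X^3*Xt^2 + y2*z^3*z2*Ys*X^3 - y2*z^3*z2*Ys*X^5*Xt^2 - y2*z^3*z2*Ys*Yt2*Zt2*X^3*Xt + y2*z^3*z2*Ys*Yt2*Zt2*X^5*Xt + y2^2*z*z2^2*Ys2*X^2*Xt^2 - y2^2*z*z2^2*Ys2*X^4 - y2^2*z*z2^2*Ys2*Yt*Zt2*X^2*Xt + y2^2*z*z2^2*Ys2*Yt*Zt2*X^4*Xt + y2^2*z*z2^2*Ys*X^4 - y2^2*z*z2^2*Ys*X^6*Xt^2 - y2^2*z*z2^2*Ys*Yt2*Zt*X^4*Xt + y2^2*z*z2^2*Ys*Yt2*Zt*X^6*Xt - y2^2*z^2*z2*Ys2*X^2*Xt^2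 + y2^2*z^2*z2*Ys2*X^4 + y2^2*z^2*z2*Ys2*Yt*Zt*X^2*Xt - y2^2*z^2*z2*Ys2*Yt*Zt*X^4*Xt - y2^2*z^2*z2*Ys*X^4 + y2^2*z^2*z2*Ys*X^6*Xt^2 + y2^2*z^2*z2*Ys*Yt2*Zt2*X^4*Xt - y2^2*z^2*z2*Ys*Yt2*Zt2*X^6*Xt + y*z2^2*Ys2*X^5 - y*z2^2*Ys2*X^5*Xt^2 + y*z2^2*Ys*X^3*Xt^2 - y*z2^2*Ys*X^5 - y*z2^2*Ys*Yt2*Zt2*X^3*Xt + y*z2^2*Ys*Yt2*Zt2*X^5*Xt + y*z*z2*Ys2*Yt*Zt2*X^3*Xt - y*z*z2*Ys2*Yt*Zt2*X^7*Xt - y*z*z2*Ys2*Yt*Zt*X^3*Xt + y*z*z2*Ys2*Yt*Zt*X^7*Xt - y*z*z2*Ys*Yt2*Zt2*X^3*Xt + y*z*z2*Ys*Yt2*Zt2*X^5*Xt + y*z*z2*Ys*Yt2*Zt*X^3*Xt - y*z*z2*Ys*Yt2*Zt*X^5*Xt + y*z*z2^3*Ys2*X^3 - y*z*z2^3*Ys2*X^5*Xt^2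 - y*z*z2^3*Ys2*Yt*Zt*X^3*Xt + y*z*z2^3*Ys2*Yt*Zt*X^5*Xt - y*z*z2^3*Ys*X^3 + y*z*z2^3*Ys*X^3*Xt^2 - y*z^2*Ys2*X^5 + y*z^2*Ys2*X^5*Xt^2 - y*z^2*Ys*X^3*Xt^2 + y*z^2*Ys*X^5 + y*z^2*Ys*Yt2*Zt*X^3*Xt - y*z^2*Ys*Yt2*Zt*X^5*Xt + y*z^2*z2^2*Ys2*Yt*Zt2*X^3*Xt - y*z^2*z2^2*Ys2*Yt*Zt2*X^5*Xt - y*z^2*z2^2*Ys2*Yt*Zt*X^3*Xt + y*z^2*z2^2*Ys2*Yt*Zt*X^5*Xt - y*z^2*z2^2*Ys*Yt2*Zt2*X*Xt + y*z^2*z2^2*Ys*Yt2*Zt2*X^5*Xt + y*z^2*z2^2*Ys*Yt2*Zt*X*Xt - y*z^2*z2^2*Ys*Yt2*Zt*X^5*Xt - y*z^3*z2*Ys2*X^3 + y*z^3*z2*Ys2*X^5*Xt^2 + y*z^3*z2*Ys2*Yt*Zt2*X^3*Xt - y*z^3*z2*Ys2*Yt*Zt2*X^5*Xt + y*z^3*z2*Ys*X^3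 - y*z^3*z2*Ys*X^3*Xt^2 - y^2*z*z2^2*Ys2*X^4 + y^2*z*z2^2*Ys2*X^6*Xt^2 + y^2*z*z2^2*Ys2*Yt*Zt*X^4*Xt - y^2*z*z2^2*Ys2*Yt*Zt*X^6*Xt - y^2*z*z2^2*Ys*X^2*Xt^2 + y^2*z*z2^2*Ys*X^4 + y^2*z*z2^2*Ys*Yt2*Zt2*X^2*Xt - y^2*z*z2^2*Ys*Yt2*Zt2*X^4*Xt + y^2*z^2*z2*Ys2*X^4 - y^2*z^2*z2*Ys2*X^6*Xt^2 - y^2*z^2*z2*Ys2*Yt*Zt2*X^4*Xt + y^2*z^2*z2*Ys2*Yt*Zt2*X^6*Xt + y^2*z^2*z2*Ys*X^2*Xt^2 - y^2*z^2*z2*Ys*X^4 - y^2*z^2*z2*Ys*Yt2*Zt*X^2*Xt + y^2*z^2*z2*Ys*Yt2*Zt*X^4*Xt) * hz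


set_option maxHeartbeats 2000000 in
/-- so(2)⊕so(4) decomposition of the so(2,4) rectangular partially massless module of
spin s and depth t:
`P₄⁻¹ · ∑_{ℓ=0}^{t-1} ∑_{n=0}^{t-1-ℓ} ∑_{σ≥ℓ} q^{σ+2n} χ_{2s-2ℓ+σ}(y)χ_σ(z)
  = χ_{2s}(y) - q^t χ_{2s-t}(y)χ_t(z) + q^{t+1} χ_{2s-t-1}(y)χ_{t-1}(z)`.
The triple series has coefficient of `q^m` given by the terms with `σ = m - 2n ≥ ℓ`. -/
theorem rectangular_PM_decomposition (s t : ℕ) (ht : 1 ≤ t) (hts : t ≤ s) :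
    P4inv * PowerSeries.mk (fun m =>
      ∑ ℓ ∈ Finset.range t, ∑ n ∈ Finset.range (t - ℓ),
        if 2 * n + ℓ ≤ m then chiY (2 * s - 2 * ℓ + (m - 2 * n)) * chiZv (m - 2 * n)
        else 0) =
    PowerSeries.C (R := L2) (chiY (2 * s)) -
      PowerSeries.C (R := L2) (chiY (2 * s - t) * chiZv t) * PowerSeries.X ^ t +
      PowerSeries.C (R := L2) (chiY (2 * s - t - 1) * chiZv (t - 1)) * PowerSeries.X ^ (t + 1) := by
  refine mul_left_cancel₀ Cdlt_ne ?_
  have Wne : (((1 - X^2) * (((PowerSeries.C (R := L2) (yz (1) (0)) * PowerSeries.C (R := L2) (yz (0) (1))) - X) * ((PowerSeries.C (R := L2) (yz (1) (0)) * PowerSeries.C (R := L2) (yz (0) (-1))) - X) * ((PowerSeries.C (R := L2) (yz (-1) (0)) * PowerSeries.C (R := L2) (yz (0) (1))) - X) * ((PowerSeries.C (R := L2) (yz (-1) (0)) * PowerSeries.C (R := L2) (yz (0) (-1))) - X))) : PowerSeries L2) ≠ 0 :=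
    mul_ne_zero oneX2_ne (mul_ne_zero (mul_ne_zero (mul_ne_zero (fac_ne 1 1) (fac_ne 1 (-1))) (fac_ne (-1) 1)) (fac_ne (-1) (-1)))
  refine mul_left_cancel₀ Wne ?_
  rw [F_eq s t]
  set Sf := ∑ l ∈ range t, ∑ n ∈ range (t - l), X ^ (2 * n) * Bs (2 * s - 2 * l) l with hSf
  have hy : PowerSeries.C (R := L2) (yz (1) (0)) * PowerSeries.C (R := L2) (yz (-1) (0)) = 1 := by
    rw [CyzMul 1 0 (-1) 0 0 0 (by ring) (by ring), yz_zero, map_one]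
  have hz : PowerSeries.C (R := L2) (yz (0) (1)) * PowerSeries.C (R := L2) (yz (0) (-1)) = 1 := by
    rw [CyzMul 0 1 0 (-1) 0 0 (by ring) (by ring), yz_zero, map_one]
  have hs1 : (1 - (PowerSeries.C (R := L2) (yz (1) (0)) * PowerSeries.C (R := L2) (yz (0) (1))) * X) * Spl (yz 1 1) t = 1 - PowerSeries.C (R := L2) (yz ((t:ℤ)) (0)) * PowerSeries.C (R := L2) (yz (0) ((t:ℤ))) * X^t := by
    have h := hS_gen t (1) (1)
    rw [Cyz_eq ((t:ℤ)*(1)) 0 ((t:ℤ)) 0 (by ring) rfl,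
        Cyz_eq 0 ((t:ℤ)*(1)) 0 ((t:ℤ)) rfl (by ring)] at h
    exact h
  have hr1 : ((PowerSeries.C (R := L2) (yz (1) (0)) * PowerSeries.C (R := L2) (yz (0) (1))) - X) * Smn (yz 1 1) t = PowerSeries.C (R := L2) (yz ((t:ℤ)) (0)) * PowerSeries.C (R := L2) (yz (0) ((t:ℤ))) * X^t * X - X^t * X^t * X := by
    have h := hR_gen t (1) (1)
    rw [Cyz_eq ((t:ℤ)*(1)) 0 ((t:ℤ)) 0 (by ring) rfl,
        Cyz_eq 0 ((t:ℤ)*(1)) 0 ((t:ℤ)) rfl (by ring)] at h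
    exact h
  have hs2 : (1 - (PowerSeries.C (R := L2) (yz (1) (0)) * PowerSeries.C (R := L2) (yz (0) (-1))) * X) * Spl (yz 1 (-1)) t = 1 - PowerSeries.C (R := L2) (yz ((t:ℤ)) (0)) * PowerSeries.C (R := L2) (yz (0) (-(t:ℤ))) * X^t := by
    have h := hS_gen t (1) (-1)
    rw [Cyz_eq ((t:ℤ)*(1)) 0 ((t:ℤ)) 0 (by ring) rfl,
        Cyz_eq 0 ((t:ℤ)*(-1)) 0 (-(t:ℤ)) rfl (by ring)] at h
    exact h
  have hr2 : ((PowerSeries.C (R := L2) (yz (1) (0)) * PowerSeries.C (R := L2) (yz (0) (-1))) - X) * Smn (yz 1 (-1)) t = PowerSeries.C (R := L2) (yz ((t:ℤ)) (0)) * PowerSeries.C (R := L2) (yz (0) (-(t:ℤ))) * X^t * X - X^t * X^t * X := by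
    have h := hR_gen t (1) (-1)
    rw [Cyz_eq ((t:ℤ)*(1)) 0 ((t:ℤ)) 0 (by ring) rfl,
        Cyz_eq 0 ((t:ℤ)*(-1)) 0 (-(t:ℤ)) rfl (by ring)] at h
    exact h
  have hs3 : (1 - (PowerSeries.C (R := L2) (yz (-1) (0)) * PowerSeries.C (R := L2) (yz (0) (1))) * X) * Spl (yz (-1) 1) t = 1 - PowerSeries.C (R := L2) (yz (-(t:ℤ)) (0)) * PowerSeries.C (R := L2) (yz (0) ((t:ℤ))) * X^t := by
    have h := hS_gen t (-1) (1)
    rw [Cyz_eq ((t:ℤ)*(-1)) 0 (-(t:ℤ)) 0 (by ring) rfl,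
        Cyz_eq 0 ((t:ℤ)*(1)) 0 ((t:ℤ)) rfl (by ring)] at h
    exact h
  have hr3 : ((PowerSeries.C (R := L2) (yz (-1) (0)) * PowerSeries.C (R := L2) (yz (0) (1))) - X) * Smn (yz (-1) 1) t = PowerSeries.C (R := L2) (yz (-(t:ℤ)) (0)) * PowerSeries.C (R := L2) (yz (0) ((t:ℤ))) * X^t * X - X^t * X^t * X := by
    have h := hR_gen t (-1) (1)
    rw [Cyz_eq ((t:ℤ)*(-1)) 0 (-(t:ℤ)) 0 (by ring) rfl,
        Cyz_eq 0 ((t:ℤ)*(1)) 0 ((t:ℤ)) rfl (by ring)] at h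
    exact h
  have hs4 : (1 - (PowerSeries.C (R := L2) (yz (-1) (0)) * PowerSeries.C (R := L2) (yz (0) (-1))) * X) * Spl (yz (-1) (-1)) t = 1 - PowerSeries.C (R := L2) (yz (-(t:ℤ)) (0)) * PowerSeries.C (R := L2) (yz (0) (-(t:ℤ))) * X^t := by
    have h := hS_gen t (-1) (-1)
    rw [Cyz_eq ((t:ℤ)*(-1)) 0 (-(t:ℤ)) 0 (by ring) rfl,
        Cyz_eq 0 ((t:ℤ)*(-1)) 0 (-(t:ℤ)) rfl (by ring)] at h
    exact h
  have hr4 : ((PowerSeries.C (R := L2) (yz (-1) (0)) * PowerSeries.C (R := L2) (yz (0) (-1))) - X) * Smn (yz (-1) (-1)) t = PowerSeries.C (R := L2) (yz (-(t:ℤ)) (0)) * PowerSeries.C (R := L2) (yz (0) (-(t:ℤ))) * X^t * X - X^t * X^t * X := by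
    have h := hR_gen t (-1) (-1)
    rw [Cyz_eq ((t:ℤ)*(-1)) 0 (-(t:ℤ)) 0 (by ring) rfl,
        Cyz_eq 0 ((t:ℤ)*(-1)) 0 (-(t:ℤ)) rfl (by ring)] at h
    exact h
  have sU1 : PowerSeries.C (R := L2) (yz (2*(s:ℤ)+1) (1)) = PowerSeries.C (R := L2) (yz (2*(s:ℤ)+1) (0)) * PowerSeries.C (R := L2) (yz (0) (1)) := (CyzMul (2*(s:ℤ)+1) 0 0 1 (2*(s:ℤ)+1) 1 (by ring) (by ring)).symm
  have sU2 : PowerSeries.C (R := L2) (yz (2*(s:ℤ)+1) (-1)) = PowerSeries.C (R := L2) (yz (2*(s:ℤ)+1) (0)) * PowerSeries.C (R := L2) (yz (0) (-1)) := (CyzMul (2*(s:ℤ)+1) 0 0 (-1) (2*(s:ℤ)+1) (-1) (by ring) (by ring)).symm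
  have sU3 : PowerSeries.C (R := L2) (yz (-2*(s:ℤ)-1) (1)) = PowerSeries.C (R := L2) (yz (-2*(s:ℤ)-1) (0)) * PowerSeries.C (R := L2) (yz (0) (1)) := (CyzMul (-2*(s:ℤ)-1) 0 0 1 (-2*(s:ℤ)-1) 1 (by ring) (by ring)).symm
  have sU4 : PowerSeries.C (R := L2) (yz (-2*(s:ℤ)-1) (-1)) = PowerSeries.C (R := L2) (yz (-2*(s:ℤ)-1) (0)) * PowerSeries.C (R := L2) (yz (0) (-1)) := (CyzMul (-2*(s:ℤ)-1) 0 0 (-1) (-2*(s:ℤ)-1) (-1) (by ring) (by ring)).symm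
  have hL1 : PowerSeries.C (R := L2) dlt * (P4inv * Sf) =
      ∑ l ∈ range t, (∑ n ∈ range (t - l), (X^2)^n) * (X^l * Dl s l) := by
    rw [hSf]
    simp only [Finset.mul_sum]
    refine Finset.sum_congr rfl fun l hl => ?_
    rw [Finset.sum_mul]
    refine Finset.sum_congr rfl fun n hn => ?_
    have hls : l ≤ s := by have := Finset.mem_range.mp hl; omega
    have e : PowerSeries.C (R := L2) dlt * (P4inv * (X^(2*n) * Bs (2*s - 2*l) l)) =
        X^(2*n) * (P4inv * (PowerSeries.C (R := L2) dlt * Bs (2*s - 2*l) l)) := by ring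
    rw [e, P4_dlt_Bs s l hls, pow_mul]
  have hL2 : (1 - X^2) * (∑ l ∈ range t, (∑ n ∈ range (t - l), (X^2)^n) * (X^l * Dl s l)) =
      (∑ l ∈ range t, X^l * Dl s l) - (∑ l ∈ range t, X^(2*t - l) * Dl s l) := by
    rw [Finset.mul_sum, ← Finset.sum_sub_distrib]
    refine Finset.sum_congr rfl fun l hl => ?_
    have hlt : l < t := Finset.mem_range.mp hl
    rw [← mul_assoc, geo1, sub_mul, one_mul, ← pow_mul, ← mul_assoc, ← pow_add]
    have e : 2*(t - l) + l = 2*t - l := by omega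
    rw [e]
  have base3 : (∑ l ∈ range t, X^l * Dl s l) =
      PowerSeries.C (R := L2) (yz (2*(s:ℤ)+1) (1)) * Q1 * Spl (yz (-1) 1) t - PowerSeries.C (R := L2) (yz (2*(s:ℤ)+1) (-1)) * Q2 * Spl (yz (-1) (-1)) t
        - PowerSeries.C (R := L2) (yz (-2*(s:ℤ)-1) (1)) * Q3 * Spl (yz 1 1) t + PowerSeries.C (R := L2) (yz (-2*(s:ℤ)-1) (-1)) * Q4 * Spl (yz 1 (-1)) t := by
    rw [Spl_def, Spl_def, Spl_def, Spl_def, Finset.mul_sum, Finset.mul_sum, Finset.mul_sum,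
      Finset.mul_sum, ← Finset.sum_sub_distrib, ← Finset.sum_sub_distrib, ← Finset.sum_add_distrib]
    refine Finset.sum_congr rfl fun l _ => ?_
    simp only [Dl]
    rw [mul_pow, mul_pow, mul_pow, mul_pow]
    ring
  have base4 : (∑ l ∈ range t, X^(2*t - l) * Dl s l) =
      PowerSeries.C (R := L2) (yz (2*(s:ℤ)+1) (1)) * Q1 * Smn (yz (-1) 1) t - PowerSeries.C (R := L2) (yz (2*(s:ℤ)+1) (-1)) * Q2 * Smn (yz (-1) (-1)) t
        - PowerSeries.C (R := L2) (yz (-2*(s:ℤ)-1) (1)) * Q3 * Smn (yz 1 1) t + PowerSeries.C (R := L2) (yz (-2*(s:ℤ)-1) (-1)) * Q4 * Smn (yz 1 (-1)) t := by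
    rw [Smn_def, Smn_def, Smn_def, Smn_def, Finset.mul_sum, Finset.mul_sum, Finset.mul_sum,
      Finset.mul_sum, ← Finset.sum_sub_distrib, ← Finset.sum_sub_distrib, ← Finset.sum_add_distrib]
    refine Finset.sum_congr rfl fun l _ => ?_
    simp only [Dl]
    ring
  have step : ((1 - X^2) * (((PowerSeries.C (R := L2) (yz (1) (0)) * PowerSeries.C (R := L2) (yz (0) (1))) - X) * ((PowerSeries.C (R := L2) (yz (1) (0)) * PowerSeries.C (R := L2) (yz (0) (-1))) - X) * ((PowerSeries.C (R := L2) (yz (-1) (0)) * PowerSeries.C (R := L2) (yz (0) (1))) - X) * ((PowerSeries.C (R := L2) (yz (-1) (0)) * PowerSeries.C (R := L2) (yz (0) (-1))) - X))) * (PowerSeries.C (R := L2) dlt * (P4inv * Sf)) =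
      (((PowerSeries.C (R := L2) (yz (1) (0)) * PowerSeries.C (R := L2) (yz (0) (1))) - X) * ((PowerSeries.C (R := L2) (yz (1) (0)) * PowerSeries.C (R := L2) (yz (0) (-1))) - X) * ((PowerSeries.C (R := L2) (yz (-1) (0)) * PowerSeries.C (R := L2) (yz (0) (1))) - X) * ((PowerSeries.C (R := L2) (yz (-1) (0)) * PowerSeries.C (R := L2) (yz (0) (-1))) - X)) * ((∑ l ∈ range t, X^l * Dl s l) - (∑ l ∈ range t, X^(2*t - l) * Dl s l)) := by
    calc ((1 - X^2) * (((PowerSeries.C (R := L2) (yz (1) (0)) * PowerSeries.C (R := L2) (yz (0) (1))) - X) * ((PowerSeries.C (R := L2) (yz (1) (0)) * PowerSeries.C (R := L2) (yz (0) (-1))) - X) * ((PowerSeries.C (R := L2) (yz (-1) (0)) * PowerSeries.C (R := L2) (yz (0) (1))) - X) * ((PowerSeries.C (R := L2) (yz (-1) (0)) * PowerSeries.C (R := L2) (yz (0) (-1))) - X))) * (PowerSeries.C (R := L2) dlt * (P4inv * Sf))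
        = (((PowerSeries.C (R := L2) (yz (1) (0)) * PowerSeries.C (R := L2) (yz (0) (1))) - X) * ((PowerSeries.C (R := L2) (yz (1) (0)) * PowerSeries.C (R := L2) (yz (0) (-1))) - X) * ((PowerSeries.C (R := L2) (yz (-1) (0)) * PowerSeries.C (R := L2) (yz (0) (1))) - X) * ((PowerSeries.C (R := L2) (yz (-1) (0)) * PowerSeries.C (R := L2) (yz (0) (-1))) - X)) * ((1 - X^2) * (PowerSeries.C (R := L2) dlt * (P4inv * Sf))) := by ring
      _ = (((PowerSeries.C (R := L2) (yz (1) (0)) * PowerSeries.C (R := L2) (yz (0) (1))) - X) * ((PowerSeries.C (R := L2) (yz (1) (0)) * PowerSeries.C (R := L2) (yz (0) (-1))) - X) * ((PowerSeries.C (R := L2) (yz (-1) (0)) * PowerSeries.C (R := L2) (yz (0) (1))) - X) * ((PowerSeries.C (R := L2) (yz (-1) (0)) * PowerSeries.C (R := L2) (yz (0) (-1))) - X)) * ((1 - X^2) * (∑ l ∈ range t, (∑ n ∈ range (t - l), (X^2)^n) * (X^l * Dl s l))) := by rw [hL1]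
      _ = (((PowerSeries.C (R := L2) (yz (1) (0)) * PowerSeries.C (R := L2) (yz (0) (1))) - X) * ((PowerSeries.C (R := L2) (yz (1) (0)) * PowerSeries.C (R := L2) (yz (0) (-1))) - X) * ((PowerSeries.C (R := L2) (yz (-1) (0)) * PowerSeries.C (R := L2) (yz (0) (1))) - X) * ((PowerSeries.C (R := L2) (yz (-1) (0)) * PowerSeries.C (R := L2) (yz (0) (-1))) - X)) * ((∑ l ∈ range t, X^l * Dl s l) - (∑ l ∈ range t, X^(2*t - l) * Dl s l)) := by rw [hL2]
  rw [step, base3, base4, dlt_RHS s t ht hts]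
  unfold Q1 Q2 Q3 Q4
  rw [sU1, sU2, sU3, sU4, sA1, sA2, sA3, sA4]
  linear_combination keyRing
    (PowerSeries.C (R := L2) (yz (1) (0))) (PowerSeries.C (R := L2) (yz (-1) (0))) (PowerSeries.C (R := L2) (yz (0) (1))) (PowerSeries.C (R := L2) (yz (0) (-1))) (PowerSeries.C (R := L2) (yz (2*(s:ℤ)+1) (0))) (PowerSeries.C (R := L2) (yz (-2*(s:ℤ)-1) (0))) (PowerSeries.C (R := L2) (yz ((t:ℤ)) (0))) (PowerSeries.C (R := L2) (yz (-(t:ℤ)) (0))) (PowerSeries.C (R := L2) (yz (0) ((t:ℤ)))) (PowerSeries.C (R := L2) (yz (0) (-(t:ℤ))))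
    X (X^t) (Spl (yz 1 1) t) (Spl (yz 1 (-1)) t) (Spl (yz (-1) 1) t) (Spl (yz (-1) (-1)) t) (Smn (yz 1 1) t) (Smn (yz 1 (-1)) t) (Smn (yz (-1) 1) t) (Smn (yz (-1) (-1)) t)
    hy hz hs1 hs2 hs3 hs4 hr1 hr2 hr3 hr4
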